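/- Let Φ be an n×n real matrix with spectral radius strictly less than 1, B an n×m real matrix, and W ⊆ ℝⁿ a bounded set. Let (c_k) be a sequence in ℝᵐ with ‖c_k‖ → 0, let (w_k) be a sequence with w_k ∈ W for all k, and define x_{k+1} = Φ x_k + B c_k + w_k from an arbitrary x_0 ∈ ℝⁿ. Then the distance from x_k to the Minkowski sum Σ_{i=0}^{k−1} (Φⁱ '' W) tends to 0 as k → ∞, where Φⁱ '' W = { Φⁱ w : w ∈ W } and the distance of a point to a set is the infimum of Euclidean distances. -/

import Mathlib

open Matrix Pointwise Filter Finset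
open scoped ENNReal NNReal

section Aux

lemma conv_aux {r : ℝ} (hr0 : 0 < r) (hr1 : r < 1) {u : ℕ → ℝ} (hu0 : ∀ j, 0 ≤ u j)
    (hu : Tendsto u atTop (nhds 0)) :
    Tendsto (fun k => ∑ i ∈ Finset.range k, r ^ i * u (k - 1 - i)) atTop (nhds 0) := by
  have hsub : 0 < 1 - r := by linarith
  obtain ⟨M, hM⟩ : ∃ M, ∀ j, u j ≤ M := by
    obtain ⟨M, hM⟩ := hu.bddAbove_range
    exact ⟨M, fun j => hM ⟨j, rfl⟩⟩
  have hM0 : 0 ≤ M := le_trans (hu0 0) (hM 0)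
  rw [Metric.tendsto_atTop]
  intro ε hε
  set ε' : ℝ := ε * (1 - r) / 4 with hε'def
  have hε' : 0 < ε' := by positivity
  obtain ⟨J, hJ⟩ : ∃ J, ∀ j ≥ J, u j < ε' := by
    rw [Metric.tendsto_atTop] at hu
    obtain ⟨J, hJ⟩ := hu ε' hε'
    refine ⟨J, fun j hj => ?_⟩
    have := hJ j hj
    rw [Real.dist_eq, sub_zero] at this
    exact lt_of_le_of_lt (le_abs_self _) this
  obtain ⟨K, hK⟩ : ∃ K, M * J * r ^ K < ε / 2 := by
    have h := (tendsto_pow_atTop_nhds_zero_of_lt_one hr0.le hr1).const_mul (M * J)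
    rw [mul_zero, Metric.tendsto_atTop] at h
    obtain ⟨K, hK⟩ := h (ε / 2) (by positivity)
    have := hK K le_rfl
    rw [Real.dist_eq, sub_zero] at this
    exact ⟨K, lt_of_le_of_lt (le_abs_self _) this⟩
  refine ⟨J + K + 1, fun k hk => ?_⟩
  have hterm : ∀ i, 0 ≤ r ^ i * u (k - 1 - i) := fun i => mul_nonneg (pow_nonneg hr0.le _) (hu0 _)
  have hsumnn : 0 ≤ ∑ i ∈ Finset.range k, r ^ i * u (k - 1 - i) :=
    Finset.sum_nonneg fun i _ => hterm i
  rw [Real.dist_eq, sub_zero, abs_of_nonneg hsumnn]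
  have hsplit : ∑ i ∈ Finset.range k, r ^ i * u (k - 1 - i)
      = (∑ i ∈ Finset.range (k - J), r ^ i * u (k - 1 - i))
        + ∑ i ∈ Finset.Ico (k - J) k, r ^ i * u (k - 1 - i) := by
    rw [Finset.range_eq_Ico, Finset.range_eq_Ico]
    exact (Finset.sum_Ico_consecutive (fun i => r ^ i * u (k - 1 - i)) (Nat.zero_le _) (Nat.sub_le k J)).symm
  have hgeom : ∀ N : ℕ, ∑ i ∈ Finset.range N, r ^ i ≤ (1 - r)⁻¹ := fun N =>
    Summable.sum_le_tsum _ (fun i _ => by positivity)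
      (summable_geometric_of_lt_one hr0.le hr1) |>.trans_eq
      (tsum_geometric_of_lt_one hr0.le hr1)
  have h1 : ∑ i ∈ Finset.range (k - J), r ^ i * u (k - 1 - i) ≤ ε / 4 := by
    calc ∑ i ∈ Finset.range (k - J), r ^ i * u (k - 1 - i)
        ≤ ∑ i ∈ Finset.range (k - J), r ^ i * ε' := by
          refine Finset.sum_le_sum fun i hi => ?_
          have hik : J ≤ k - 1 - i := by
            have := Finset.mem_range.mp hi; omega
          exact mul_le_mul_of_nonneg_left (hJ _ hik).le (by positivity)
      _ = (∑ i ∈ Finset.range (k - J), r ^ i) * ε' := by rw [Finset.sum_mul]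
      _ ≤ (1 - r)⁻¹ * ε' := by
          exact mul_le_mul_of_nonneg_right (hgeom _) hε'.le
      _ = ε / 4 := by rw [hε'def]; field_simp
  have h2 : ∑ i ∈ Finset.Ico (k - J) k, r ^ i * u (k - 1 - i) < ε / 2 := by
    have hcard : (Finset.Ico (k - J) k).card = J := by
      rw [Nat.card_Ico]; omega
    calc ∑ i ∈ Finset.Ico (k - J) k, r ^ i * u (k - 1 - i)
        ≤ ∑ i ∈ Finset.Ico (k - J) k, r ^ K * M := by
          refine Finset.sum_le_sum fun i hi => ?_
          have hiK : K ≤ i := by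
            have := (Finset.mem_Ico.mp hi).1; omega
          exact mul_le_mul (pow_le_pow_of_le_one hr0.le hr1.le hiK) (hM _) (hu0 _)
            (by positivity)
      _ = M * J * r ^ K := by
          rw [Finset.sum_const, hcard, nsmul_eq_mul]; ring
      _ < ε / 2 := hK
  rw [hsplit]
  linarith


lemma norm_real_le_complex {n : ℕ} (A : Matrix (Fin n) (Fin n) ℝ) :
    ‖Matrix.toEuclideanCLM (𝕜 := ℝ) A‖
      ≤ ‖Matrix.toEuclideanCLM (𝕜 := ℂ) (A.map (algebraMap ℝ ℂ))‖ := by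
  refine ContinuousLinearMap.opNorm_le_bound _ (norm_nonneg _) fun x => ?_
  set xv : Fin n → ℝ := WithLp.equiv 2 _ x with hxv
  set xc : EuclideanSpace ℂ (Fin n) :=
    (WithLp.equiv 2 (Fin n → ℂ)).symm (fun i => (xv i : ℂ)) with hxc
  have hnxc : ‖xc‖ = ‖x‖ := by
    rw [EuclideanSpace.norm_eq, EuclideanSpace.norm_eq]
    congr 1
    refine Finset.sum_congr rfl fun i _ => ?_
    simp [hxc, Complex.norm_real]
    rfl
  have himg : Matrix.toEuclideanCLM (𝕜 := ℂ) (A.map (algebraMap ℝ ℂ)) xc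
      = (WithLp.equiv 2 (Fin n → ℂ)).symm (fun i => (((A *ᵥ xv) i : ℝ) : ℂ)) := by
    rw [hxc, WithLp.equiv_symm_apply, Matrix.toEuclideanCLM_toLp]
    congr 1
    funext i
    exact (RingHom.map_mulVec (algebraMap ℝ ℂ) A xv i).symm
  have himgnorm : ‖Matrix.toEuclideanCLM (𝕜 := ℂ) (A.map (algebraMap ℝ ℂ)) xc‖
      = ‖Matrix.toEuclideanCLM (𝕜 := ℝ) A x‖ := by
    rw [himg, EuclideanSpace.norm_eq, EuclideanSpace.norm_eq]
    congr 1
    refine Finset.sum_congr rfl fun i _ => ?_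
    have : Matrix.toEuclideanCLM (𝕜 := ℝ) A x
        = (WithLp.equiv 2 (Fin n → ℝ)).symm (A *ᵥ xv) := by
      conv_lhs => rw [show x = (WithLp.equiv 2 (Fin n → ℝ)).symm xv from rfl]
      rw [WithLp.equiv_symm_apply, Matrix.toEuclideanCLM_toLp]
    rw [this]
    simp [Complex.norm_real]
  calc ‖Matrix.toEuclideanCLM (𝕜 := ℝ) A x‖
      = ‖Matrix.toEuclideanCLM (𝕜 := ℂ) (A.map (algebraMap ℝ ℂ)) xc‖ := himgnorm.symm
    _ ≤ ‖Matrix.toEuclideanCLM (𝕜 := ℂ) (A.map (algebraMap ℝ ℂ))‖ * ‖xc‖ :=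
        ContinuousLinearMap.le_opNorm _ _
    _ = ‖Matrix.toEuclideanCLM (𝕜 := ℂ) (A.map (algebraMap ℝ ℂ))‖ * ‖x‖ := by rw [hnxc]

lemma schur_pow_bound {n : ℕ} (Φ : Matrix (Fin n) (Fin n) ℝ)
    (hΦ : ∀ z ∈ spectrum ℂ (Φ.map (algebraMap ℝ ℂ)), ‖z‖ < 1) :
    ∃ r : ℝ, 0 < r ∧ r < 1 ∧
      ∀ᶠ k in atTop, ‖(Matrix.toEuclideanCLM (𝕜 := ℝ) Φ) ^ k‖ ≤ r ^ k := by
  set Tc := Matrix.toEuclideanCLM (𝕜 := ℂ) (Φ.map (algebraMap ℝ ℂ)) with hTc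
  have hspec : spectrum ℂ Tc = spectrum ℂ (Φ.map (algebraMap ℝ ℂ)) :=
    AlgEquiv.spectrum_eq (Matrix.toEuclideanCLM (𝕜 := ℂ)) _
  have hrad : spectralRadius ℂ Tc < 1 := by
    rcases (spectrum ℂ Tc).eq_empty_or_nonempty with h | h
    · rw [spectralRadius]
      simp [h]
    · have := spectrum.spectralRadius_lt_of_forall_lt_of_nonempty (𝕜 := ℂ) h
        (r := 1) (fun z hz => by
          have := hΦ z (hspec ▸ hz)
          simpa [← NNReal.coe_lt_coe] using this)
      simpa using this
  obtain ⟨r, hr1, hr2⟩ := ENNReal.lt_iff_exists_nnreal_btwn.mp hrad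
  have hr0 : 0 < r := by
    have h0 : (0 : ℝ≥0∞) < (r : ℝ≥0∞) := lt_of_le_of_lt zero_le hr1
    exact_mod_cast h0
  have hrlt1 : (r : ℝ) < 1 := by
    have := hr2
    rw [← ENNReal.coe_one, ENNReal.coe_lt_coe] at this
    exact_mod_cast this
  have hgel := spectrum.pow_nnnorm_pow_one_div_tendsto_nhds_spectralRadius Tc
  have hev := hgel.eventually_lt_const hr1
  refine ⟨r, by exact_mod_cast hr0, hrlt1, ?_⟩
  filter_upwards [hev, eventually_ge_atTop 1] with k hk hk1
  have hkpos : (0 : ℝ) < k := by exact_mod_cast hk1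
  have h2 : (‖Tc ^ k‖₊ : ℝ≥0∞) < (r : ℝ≥0∞) ^ ((k : ℕ) : ℝ) := by
    have := ENNReal.rpow_lt_rpow hk hkpos
    rwa [← ENNReal.rpow_mul, one_div, inv_mul_cancel₀ hkpos.ne', ENNReal.rpow_one] at this
  have h3 : ‖Tc ^ k‖ ≤ (r : ℝ) ^ k := by
    rw [ENNReal.rpow_natCast, ← ENNReal.coe_pow, ENNReal.coe_lt_coe] at h2
    have h2' := h2.le
    exact_mod_cast h2'
  refine le_trans ?_ h3
  have : (Matrix.toEuclideanCLM (𝕜 := ℝ) Φ) ^ k = Matrix.toEuclideanCLM (𝕜 := ℝ) (Φ ^ k) :=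
    (map_pow (Matrix.toEuclideanCLM (𝕜 := ℝ)) Φ k).symm
  have hmp : (Φ ^ k).map (algebraMap ℝ ℂ) = (Φ.map (algebraMap ℝ ℂ)) ^ k := by
    have h := map_pow ((algebraMap ℝ ℂ).mapMatrix) Φ k
    simpa [RingHom.mapMatrix_apply] using h
  rw [this, hTc, ← map_pow (Matrix.toEuclideanCLM (𝕜 := ℂ)), ← hmp]
  exact norm_real_le_complex _

end Aux

/-- the asymptotic convergence claim (E.5)–(E.6): if `Φ` is Schur stable,
`‖c_k‖ → 0` and `w_k ∈ W` with `W` bounded, then the Euclidean distance from the closed-loop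
state `x_k` (with `x_{k+1} = Φ x_k + B c_k + w_k`) to the Minkowski sum `Σ_{i<k} Φⁱ '' W`
tends to `0`. -/
theorem state_converges_to_mRPI {n m : ℕ}
    (Φ : Matrix (Fin n) (Fin n) ℝ) (B : Matrix (Fin n) (Fin m) ℝ)
    (W : Set (EuclideanSpace ℝ (Fin n)))
    (hΦ : ∀ z ∈ spectrum ℂ (Φ.map (algebraMap ℝ ℂ)), ‖z‖ < 1)
    (hW : Bornology.IsBounded W)
    (c : ℕ → EuclideanSpace ℝ (Fin m))
    (hc : Filter.Tendsto (fun k => ‖c k‖) Filter.atTop (nhds 0))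
    (w : ℕ → EuclideanSpace ℝ (Fin n)) (hw : ∀ k, w k ∈ W)
    (x : ℕ → EuclideanSpace ℝ (Fin n))
    (hx : ∀ k, x (k + 1)
      = (WithLp.equiv 2 (Fin n → ℝ)).symm (Φ *ᵥ x k + B *ᵥ c k) + w k) :
    Filter.Tendsto
      (fun k => Metric.infDist (x k)
        (∑ i ∈ Finset.range k,
          (fun (v : EuclideanSpace ℝ (Fin n)) => (WithLp.equiv 2 (Fin n → ℝ)).symm ((Φ ^ i) *ᵥ v)) '' W))
      Filter.atTop (nhds 0) := by
  classical
  set T : EuclideanSpace ℝ (Fin n) →L[ℝ] EuclideanSpace ℝ (Fin n) :=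
    Matrix.toEuclideanCLM (𝕜 := ℝ) Φ with hTdef
  have hTapp : ∀ (A : Matrix (Fin n) (Fin n) ℝ) (v : Fin n → ℝ),
      Matrix.toEuclideanCLM (𝕜 := ℝ) A ((WithLp.equiv 2 (Fin n → ℝ)).symm v)
        = (WithLp.equiv 2 (Fin n → ℝ)).symm (A *ᵥ v) := by
    intro A v
    rw [WithLp.equiv_symm_apply, Matrix.toEuclideanCLM_toLp]
  -- the perturbation sequence
  set d : ℕ → EuclideanSpace ℝ (Fin n) :=
    fun k => (WithLp.equiv 2 (Fin n → ℝ)).symm (B *ᵥ c k) with hddef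
  have hd : Tendsto (fun k => ‖d k‖) atTop (nhds 0) := by
    set BL : EuclideanSpace ℝ (Fin m) →L[ℝ] EuclideanSpace ℝ (Fin n) :=
      LinearMap.toContinuousLinearMap (Matrix.toEuclideanLin B) with hBL
    have hdk : ∀ k, d k = BL (c k) := fun k => rfl
    have hle : ∀ k, ‖d k‖ ≤ ‖BL‖ * ‖c k‖ := fun k => by
      rw [hdk]; exact BL.le_opNorm _
    have h0 : Tendsto (fun k => ‖BL‖ * ‖c k‖) atTop (nhds 0) := by
      simpa using hc.const_mul ‖BL‖
    exact squeeze_zero (fun k => norm_nonneg _) hle h0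
  -- the reference point in the Minkowski sum
  set p : ℕ → EuclideanSpace ℝ (Fin n) := fun k =>
    ∑ i ∈ Finset.range k,
      (WithLp.equiv 2 (Fin n → ℝ)).symm ((Φ ^ i) *ᵥ (w (k - 1 - i))) with hpdef
  have hmem : ∀ k, p k ∈ ∑ i ∈ Finset.range k,
      (fun (v : EuclideanSpace ℝ (Fin n)) => (WithLp.equiv 2 (Fin n → ℝ)).symm ((Φ ^ i) *ᵥ v)) '' W := by
    intro k
    exact Set.finset_sum_mem_finset_sum (Finset.range k) _
      (fun i => (WithLp.equiv 2 (Fin n → ℝ)).symm ((Φ ^ i) *ᵥ (w (k - 1 - i))))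
      (fun i _ => ⟨w (k - 1 - i), hw _, rfl⟩)
  set e : ℕ → EuclideanSpace ℝ (Fin n) := fun k => x k - p k with hedef
  have hbound : ∀ k, Metric.infDist (x k) (∑ i ∈ Finset.range k,
      (fun (v : EuclideanSpace ℝ (Fin n)) => (WithLp.equiv 2 (Fin n → ℝ)).symm ((Φ ^ i) *ᵥ v)) '' W) ≤ ‖e k‖ := by
    intro k
    calc Metric.infDist (x k) _ ≤ dist (x k) (p k) := Metric.infDist_le_dist_of_mem (hmem k)
      _ = ‖e k‖ := dist_eq_norm _ _
  -- the recursion for e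
  have hrec : ∀ k, e (k + 1) = T (e k) + d k := by
    intro k
    have hp : p (k + 1) = w k + T (p k) := by
      rw [hpdef]
      simp only
      rw [Finset.sum_range_succ']
      have h0 : (WithLp.equiv 2 (Fin n → ℝ)).symm ((Φ ^ 0) *ᵥ (w (k + 1 - 1 - 0))) = w k := by
        simp [Matrix.one_mulVec]
      have hstep : ∀ i, (WithLp.equiv 2 (Fin n → ℝ)).symm
            ((Φ ^ (i + 1)) *ᵥ (w (k + 1 - 1 - (i + 1))))
          = T ((WithLp.equiv 2 (Fin n → ℝ)).symm ((Φ ^ i) *ᵥ (w (k - 1 - i)))) := by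
        intro i
        rw [hTdef, hTapp]
        have hidx : k + 1 - 1 - (i + 1) = k - 1 - i := by omega
        rw [hidx, pow_succ', Matrix.mulVec_mulVec]
      rw [h0]
      rw [Finset.sum_congr rfl (fun i _ => hstep i), ← map_sum]
      exact add_comm _ _
    have hx' := hx k
    have hsplit : (WithLp.equiv 2 (Fin n → ℝ)).symm (Φ *ᵥ x k + B *ᵥ c k)
        = T (x k) + d k := by
      rw [WithLp.equiv_symm_apply, WithLp.toLp_add, hddef]
      congr 1
    rw [hedef]
    simp only
    rw [hx', hp, hsplit, map_sub]
    abel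
  -- closed form for e
  have hclosed : ∀ k, e k = (T ^ k) (e 0)
      + ∑ i ∈ Finset.range k, (T ^ i) (d (k - 1 - i)) := by
    intro k
    induction k with
    | zero => simp
    | succ k ih =>
      rw [hrec k, ih, Finset.sum_range_succ']
      have hstep : ∀ i, (T ^ (i + 1)) (d (k + 1 - 1 - (i + 1)))
          = T ((T ^ i) (d (k - 1 - i))) := by
        intro i
        have hidx : k + 1 - 1 - (i + 1) = k - 1 - i := by omega
        rw [hidx, pow_succ']
        rfl
      rw [Finset.sum_congr rfl (fun i _ => hstep i), ← map_sum]
      have : (T ^ (k + 1)) (e 0) = T ((T ^ k) (e 0)) := by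
        rw [pow_succ']; rfl
      rw [this, map_add]
      simp only [pow_zero, ContinuousLinearMap.one_apply]
      have h00 : d (k + 1 - 1 - 0) = d k := by norm_num
      rw [h00]
      abel
  -- geometric bound on powers of T
  obtain ⟨r, hr0, hr1, hev⟩ := schur_pow_bound Φ hΦ
  obtain ⟨K, hK⟩ := eventually_atTop.mp hev
  set C : ℝ := (∑ j ∈ Finset.range K, ‖T ^ j‖ / r ^ j) + 1 with hCdef
  have hC1 : 1 ≤ C := by
    rw [hCdef]
    have : 0 ≤ ∑ j ∈ Finset.range K, ‖T ^ j‖ / r ^ j :=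
      Finset.sum_nonneg fun j _ => div_nonneg (norm_nonneg _) (pow_nonneg hr0.le _)
    linarith
  have hC0 : 0 ≤ C := by linarith
  have hC : ∀ k, ‖T ^ k‖ ≤ C * r ^ k := by
    intro k
    rcases le_or_gt K k with h | h
    · calc ‖T ^ k‖ ≤ r ^ k := hK k h
        _ ≤ C * r ^ k := by nlinarith [pow_pos hr0 k]
    · have hterm : ‖T ^ k‖ / r ^ k ≤ C := by
        rw [hCdef]
        have h1 : ‖T ^ k‖ / r ^ k ≤ ∑ j ∈ Finset.range K, ‖T ^ j‖ / r ^ j :=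
          Finset.single_le_sum (f := fun j => ‖T ^ j‖ / r ^ j)
            (fun j _ => div_nonneg (norm_nonneg _) (pow_nonneg hr0.le _))
            (Finset.mem_range.mpr h)
        linarith
      have hrk : 0 < r ^ k := pow_pos hr0 k
      calc ‖T ^ k‖ = (‖T ^ k‖ / r ^ k) * r ^ k := (div_mul_cancel₀ _ hrk.ne').symm
        _ ≤ C * r ^ k := mul_le_mul_of_nonneg_right hterm hrk.le
  -- final squeeze
  have hle : ∀ k, ‖e k‖ ≤ C * ‖e 0‖ * r ^ k
      + C * ∑ i ∈ Finset.range k, r ^ i * ‖d (k - 1 - i)‖ := by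
    intro k
    rw [hclosed k]
    calc ‖(T ^ k) (e 0) + ∑ i ∈ Finset.range k, (T ^ i) (d (k - 1 - i))‖
        ≤ ‖(T ^ k) (e 0)‖ + ‖∑ i ∈ Finset.range k, (T ^ i) (d (k - 1 - i))‖ :=
          norm_add_le _ _
      _ ≤ C * ‖e 0‖ * r ^ k + ∑ i ∈ Finset.range k, C * r ^ i * ‖d (k - 1 - i)‖ := by
          gcongr ?_ + ?_
          · calc ‖(T ^ k) (e 0)‖ ≤ ‖T ^ k‖ * ‖e 0‖ := (T ^ k).le_opNorm _
              _ ≤ C * r ^ k * ‖e 0‖ :=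
                mul_le_mul_of_nonneg_right (hC k) (norm_nonneg _)
              _ = C * ‖e 0‖ * r ^ k := by ring
          · calc ‖∑ i ∈ Finset.range k, (T ^ i) (d (k - 1 - i))‖
                ≤ ∑ i ∈ Finset.range k, ‖(T ^ i) (d (k - 1 - i))‖ :=
                  norm_sum_le _ _
              _ ≤ ∑ i ∈ Finset.range k, C * r ^ i * ‖d (k - 1 - i)‖ := by
                  refine Finset.sum_le_sum fun i _ => ?_
                  calc ‖(T ^ i) (d (k - 1 - i))‖ ≤ ‖T ^ i‖ * ‖d (k - 1 - i)‖ :=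
                      (T ^ i).le_opNorm _
                    _ ≤ C * r ^ i * ‖d (k - 1 - i)‖ :=
                      mul_le_mul_of_nonneg_right (hC i) (norm_nonneg _)
      _ = C * ‖e 0‖ * r ^ k + C * ∑ i ∈ Finset.range k, r ^ i * ‖d (k - 1 - i)‖ := by
          rw [Finset.mul_sum]
          congr 1
          exact Finset.sum_congr rfl fun i _ => by ring
  have hg : Tendsto (fun k => C * ‖e 0‖ * r ^ k
      + C * ∑ i ∈ Finset.range k, r ^ i * ‖d (k - 1 - i)‖) atTop (nhds 0) := by
    have h1 : Tendsto (fun k => C * ‖e 0‖ * r ^ k) atTop (nhds 0) := by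
      simpa using (tendsto_pow_atTop_nhds_zero_of_lt_one hr0.le hr1).const_mul (C * ‖e 0‖)
    have h2 : Tendsto (fun k => C * ∑ i ∈ Finset.range k, r ^ i * ‖d (k - 1 - i)‖)
        atTop (nhds 0) := by
      simpa using (conv_aux hr0 hr1 (fun j => norm_nonneg (d j)) hd).const_mul C
    simpa using h1.add h2
  exact squeeze_zero (fun k => Metric.infDist_nonneg)
    (fun k => le_trans (hbound k) (hle k)) hg
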